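/- For every θ ∈ (0, π), π·cos θ < sin θ + (π − θ)·cos θ < π. Consequently, the infinite width angle map f : [0, π] → [0, π] defined by f(θ) = arccos((sin θ + (π − θ)·cos θ)/π) satisfies 0 < f(θ) < θ for every θ ∈ (0, π), and f(0) = 0. -/
import Mathlib

open Real

/-- The infinite width angle update map `f(θ) = arccos((sin θ + (π − θ)·cos θ)/π)`,
mapping `[0, π]` to `[0, π]`. -/
noncomputable def infWidthMap (θ : ℝ) : ℝ :=
  Real.arccos ((Real.sin θ + (π - θ) * Real.cos θ) / π)

lemma key_bounds {θ : ℝ} (hθ : θ ∈ Set.Ioo (0 : ℝ) π) :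
    π * Real.cos θ < Real.sin θ + (π - θ) * Real.cos θ ∧
    Real.sin θ + (π - θ) * Real.cos θ < π := by
  obtain ⟨h0, hπ⟩ := hθ
  constructor
  · -- reduces to θ * cos θ < sin θ
    have : θ * Real.cos θ < Real.sin θ := by
      rcases le_or_gt (Real.cos θ) 0 with hc | hc
      · have hs : 0 < Real.sin θ := Real.sin_pos_of_pos_of_lt_pi h0 hπ
        nlinarith
      · have hlt : θ < π / 2 := by
          by_contra h
          push_neg at h
          have : Real.cos θ ≤ 0 := Real.cos_nonpos_of_pi_div_two_le_of_le h
            (by linarith [Real.pi_pos])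
          linarith
        have := Real.lt_tan h0 hlt
        rw [Real.tan_eq_sin_div_cos] at this
        calc θ * Real.cos θ < (Real.sin θ / Real.cos θ) * Real.cos θ := by
              exact mul_lt_mul_of_pos_right this hc
          _ = Real.sin θ := div_mul_cancel₀ _ hc.ne'
    nlinarith
  · have hs : Real.sin θ < θ := Real.sin_lt h0
    have hc : Real.cos θ < 1 := by
      have := Real.cos_lt_cos_of_nonneg_of_le_pi le_rfl hπ.le h0
      simpa using this
    nlinarith

theorem infWidthMap_strict_decrease :
    (∀ θ ∈ Set.Ioo (0 : ℝ) π,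
      π * Real.cos θ < Real.sin θ + (π - θ) * Real.cos θ ∧
      Real.sin θ + (π - θ) * Real.cos θ < π) ∧
    (∀ θ ∈ Set.Ioo (0 : ℝ) π, 0 < infWidthMap θ ∧ infWidthMap θ < θ) ∧
    infWidthMap 0 = 0 := by
  refine ⟨fun θ hθ => key_bounds hθ, fun θ hθ => ?_, ?_⟩
  · obtain ⟨h1, h2⟩ := key_bounds hθ
    obtain ⟨h0, hπ⟩ := hθ
    have hpi := Real.pi_pos
    set c := (Real.sin θ + (π - θ) * Real.cos θ) / π with hc
    have hc1 : c < 1 := (div_lt_one hpi).mpr h2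
    have hcg : Real.cos θ < c := by
      rw [hc, lt_div_iff₀ hpi]; linarith [h1]
    have hcl : -1 ≤ Real.cos θ := Real.neg_one_le_cos θ
    constructor
    · exact Real.arccos_pos.mpr hc1
    · have : Real.arccos c < Real.arccos (Real.cos θ) :=
        Real.strictAntiOn_arccos ⟨hcl, Real.cos_le_one θ⟩
          ⟨by linarith, hc1.le⟩ hcg
      rwa [Real.arccos_cos h0.le hπ.le] at this
  · simp [infWidthMap, Real.pi_ne_zero, div_self]
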